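/- Let A, B be lower triangular n×n matrices over a field K (ℝ or ℂ) each with a single scalar value on the diagonal, such that AB = BA and e^A = e^B. If K = ℝ, then A = B. If K = ℂ, then A = B + 2πik·I for some integer k. -/

import Mathlib

open NormedSpace Nat

/-- `A` is lower triangular with all diagonal entries equal (the set `𝕋_n(K)`). -/
def LowerTriConstDiag {K : Type*} [Semiring K] {n : ℕ}
    (A : Matrix (Fin n) (Fin n) K) : Prop :=
  (∀ i j : Fin n, i < j → A i j = 0) ∧ ∀ i j : Fin n, A i i = A j j

section Generic
variable {𝕂 𝔸 : Type*} [RCLike 𝕂] [NormedRing 𝔸] [NormedAlgebra 𝕂 𝔸] [CompleteSpace 𝔸]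

lemma aux_exp_eq_sum {x : 𝔸} {m : ℕ} (h : x ^ m = 0) :
    exp x = ∑ k ∈ Finset.range m, (k ! : 𝕂)⁻¹ • x ^ k := by
  rw [exp_eq_tsum 𝕂]
  exact tsum_eq_sum (fun k hk => by
    rw [pow_eq_zero_of_le (le_of_not_gt (by simpa using hk)) h, smul_zero])

lemma aux_exp_smul_one (c : 𝕂) : exp (c • (1 : 𝔸)) = exp c • (1 : 𝔸) := by
  rw [exp_eq_tsum 𝕂, exp_eq_tsum 𝕂, ← Summable.tsum_smul_const (expSeries_summable' (𝕂 := 𝕂) c)]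
  exact tsum_congr fun n => by rw [smul_pow, one_pow, smul_assoc]

lemma aux_isNilpotent_exp_sub_one {𝕂 : Type*} [RCLike 𝕂] [NormedAlgebra 𝕂 𝔸] {x : 𝔸} {m : ℕ} (h : x ^ m = 0) :
    IsNilpotent (exp x - 1) := by
  rw [aux_exp_eq_sum (𝕂 := 𝕂) h]
  rcases Nat.eq_zero_or_pos m with rfl | hm
  · have h1 : (1 : 𝔸) = 0 := by simpa using h
    simp [h1]
  · rw [Finset.range_eq_Ico, Finset.sum_eq_sum_Ico_succ_bot hm]
    simp only [pow_zero, Nat.factorial_zero, Nat.cast_one, inv_one, one_smul,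
      add_sub_cancel_left]
    refine Commute.isNilpotent_sum (fun k hk => ?_) (fun k l _ _ => ?_)
    · exact (IsNilpotent.smul ⟨m, by rw [← pow_mul]; exact pow_eq_zero_of_le (Nat.le_mul_of_pos_left m (Finset.mem_Ico.1 hk).1) h⟩ _)
    · exact (((Commute.refl x).pow_pow k l).smul_left _).smul_right _

lemma aux_step {𝕂 : Type*} [RCLike 𝕂] [NormedAlgebra 𝕂 𝔸] {x : 𝔸} (hx : exp x = 1) {j : ℕ} (h : x ^ (j + 2) = 0) :
    x ^ (j + 1) = 0 := by
  have h2 : x ^ j * exp x = x ^ j := by rw [hx, mul_one]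
  rw [aux_exp_eq_sum (𝕂 := 𝕂) h, Finset.mul_sum] at h2
  have h3 : ∀ k ∈ Finset.range (j + 2), x ^ j * (k ! : 𝕂)⁻¹ • x ^ k
      = if k = 0 then x ^ j else if k = 1 then x ^ (j + 1) else 0 := by
    intro k _
    rcases k with _ | k
    · simp
    rcases k with _ | k
    · simp [mul_smul_comm, ← pow_succ]
    · have : x ^ j * x ^ (k + 2) = 0 := by
        rw [← pow_add]
        exact pow_eq_zero_of_le (by omega) h
      simp [mul_smul_comm, this]
  rw [Finset.sum_congr rfl h3] at h2
  have h4 : (∑ k ∈ Finset.range (j + 2),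
      if k = 0 then x ^ j else if k = 1 then x ^ (j + 1) else 0)
      = x ^ j + x ^ (j + 1) := by
    rw [Finset.range_eq_Ico, Finset.sum_eq_sum_Ico_succ_bot (by omega),
      Finset.sum_eq_sum_Ico_succ_bot (by omega),
      Finset.sum_eq_zero (fun k hk => by
        have h5 := (Finset.mem_Ico.1 hk).1
        rw [if_neg (by omega), if_neg (by omega)])]
    simp
  rw [h4] at h2
  exact add_eq_left.mp h2

lemma aux_eq_zero_of_exp_eq_one {𝕂 : Type*} [RCLike 𝕂] [NormedAlgebra 𝕂 𝔸] {x : 𝔸} (hnil : IsNilpotent x) (hx : exp x = 1) :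
    x = 0 := by
  obtain ⟨m, hm⟩ := hnil
  have key : ∀ j, x ^ (j + 1) = 0 → x = 0 := by
    intro j
    induction j with
    | zero => intro h1; simpa using h1
    | succ j ih => intro h1; exact ih (aux_step (𝕂 := 𝕂) hx h1)
  rcases m with _ | m
  · have h1 : (1 : 𝔸) = 0 := by simpa using hm
    calc x = x * 1 := (mul_one x).symm
    _ = 0 := by rw [h1, mul_zero]
  · exact key m hm

end Generic

lemma aux_strictLower_pow {K : Type*} [Semiring K] {n : ℕ} {N : Matrix (Fin n) (Fin n) K}
    (h : ∀ i j : Fin n, i ≤ j → N i j = 0) : N ^ n = 0 := by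
  have key : ∀ (k : ℕ) (i j : Fin n), (i : ℕ) < (j : ℕ) + k → (N ^ k) i j = 0 := by
    intro k
    induction k with
    | zero =>
      intro i j hij
      rw [pow_zero, Matrix.one_apply_ne (by rintro rfl; omega)]
    | succ k ih =>
      intro i j hij
      rw [pow_succ, Matrix.mul_apply]
      refine Finset.sum_eq_zero fun l _ => ?_
      rcases lt_or_ge (i : ℕ) ((l : ℕ) + k) with hl | hl
      · rw [ih i l hl, zero_mul]
      · rw [h l j (by rw [Fin.le_def]; omega), mul_zero]
  ext i j
  rw [key n i j (by omega)]
  rfl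

section Main
variable {𝕂 : Type*} [RCLike 𝕂] {n : ℕ}

open Matrix in
lemma aux_key (hn : 0 < n) (A B : Matrix (Fin n) (Fin n) 𝕂)
    (hA : LowerTriConstDiag A) (hB : LowerTriConstDiag B)
    (hcomm : A * B = B * A) (hexp : exp A = exp B) :
    exp (A ⟨0, hn⟩ ⟨0, hn⟩) = exp (B ⟨0, hn⟩ ⟨0, hn⟩) ∧
      A - A ⟨0, hn⟩ ⟨0, hn⟩ • 1 = B - B ⟨0, hn⟩ ⟨0, hn⟩ • 1 := by
  letI : SeminormedRing (Matrix (Fin n) (Fin n) 𝕂) := Matrix.linftyOpSemiNormedRing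
  letI : NormedRing (Matrix (Fin n) (Fin n) 𝕂) := Matrix.linftyOpNormedRing
  letI : NormedAlgebra 𝕂 (Matrix (Fin n) (Fin n) 𝕂) := Matrix.linftyOpNormedAlgebra
  letI : @CompleteSpace (Matrix (Fin n) (Fin n) 𝕂) PseudoMetricSpace.toUniformSpace := by exact (Matrix.instCompleteSpace (Fin n) (Fin n) 𝕂 : _)
  set i0 : Fin n := ⟨0, hn⟩
  set μ := A i0 i0
  set ν := B i0 i0
  set N := A - μ • 1 with hNdef
  set M := B - ν • 1 with hMdef
  -- strict lower triangularity
  have hNlow : ∀ i j : Fin n, i ≤ j → N i j = 0 := by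
    intro i j hij
    rcases eq_or_lt_of_le hij with rfl | hlt
    · simp [hNdef, Matrix.sub_apply, Matrix.smul_apply, Matrix.one_apply_eq, hA.2 i i0, μ]
    · simp [hNdef, Matrix.sub_apply, Matrix.smul_apply,
        Matrix.one_apply_ne (_root_.ne_of_lt hlt), hA.1 i j hlt]
  have hMlow : ∀ i j : Fin n, i ≤ j → M i j = 0 := by
    intro i j hij
    rcases eq_or_lt_of_le hij with rfl | hlt
    · simp [hMdef, Matrix.sub_apply, Matrix.smul_apply, Matrix.one_apply_eq, hB.2 i i0, ν]
    · simp [hMdef, Matrix.sub_apply, Matrix.smul_apply,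
        Matrix.one_apply_ne (_root_.ne_of_lt hlt), hB.1 i j hlt]
  have hN : N ^ n = 0 := aux_strictLower_pow hNlow
  have hM : M ^ n = 0 := aux_strictLower_pow hMlow
  -- commutation
  have hAB : Commute A B := hcomm
  have hNM : Commute N M :=
    (hAB.sub_right ((Commute.one_right A).smul_right ν)).sub_left
      (((Commute.one_left B).smul_left μ).sub_right
        (((Commute.one_left (1 : Matrix (Fin n) (Fin n) 𝕂)).smul_left μ).smul_right ν))
  -- exp decomposition
  have hAdec : A = μ • 1 + N := by rw [hNdef]; abel
  have hBdec : B = ν • 1 + M := by rw [hMdef]; abel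
  have hexpA : exp A = exp μ • exp N := by
    rw [hAdec, Matrix.exp_add_of_commute _ _ ((Commute.one_left N).smul_left μ)]
    erw [aux_exp_smul_one]
    rw [smul_mul_assoc, one_mul]
  have hexpB : exp B = exp ν • exp M := by
    rw [hBdec, Matrix.exp_add_of_commute _ _ ((Commute.one_left M).smul_left ν)]
    erw [aux_exp_smul_one]
    rw [smul_mul_assoc, one_mul]
  have h1 : exp μ • exp N = exp ν • exp M := by rw [← hexpA, ← hexpB, hexp]
  -- the scalar parts agree
  set P := exp N - 1 with hPdef
  set Q := exp M - 1 with hQdef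
  have hPnil : IsNilpotent P := aux_isNilpotent_exp_sub_one (𝕂 := 𝕂) hN
  have hQnil : IsNilpotent Q := aux_isNilpotent_exp_sub_one (𝕂 := 𝕂) hM
  have hPQ : Commute P Q :=
    (hNM.exp.sub_right (Commute.one_right _)).sub_left
      ((Commute.one_left _).sub_right (Commute.one_right _))
  have key : (exp ν - exp μ) • (1 : Matrix (Fin n) (Fin n) 𝕂)
      = exp μ • P - exp ν • Q := by
    have e1 : exp μ • P - exp ν • Q
        = (exp μ • exp N - exp ν • exp M)
          + (exp ν • (1 : Matrix (Fin n) (Fin n) 𝕂) - exp μ • 1) := by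
      rw [hPdef, hQdef, smul_sub, smul_sub]; abel
    rw [e1, h1, sub_self, zero_add, sub_smul]
  have hnilscal : IsNilpotent ((exp ν - exp μ) • (1 : Matrix (Fin n) (Fin n) 𝕂)) := by
    rw [key]
    exact (hPQ.smul_left _).smul_right _ |>.isNilpotent_sub (hPnil.smul _) (hQnil.smul _)
  have hsc : exp ν = exp μ := by
    obtain ⟨k, hk⟩ := hnilscal
    rw [smul_pow, one_pow] at hk
    have hk2 : (exp ν - exp μ) ^ k = 0 := by
      have := congrFun (congrFun hk i0) i0
      simpa [Matrix.smul_apply, Matrix.one_apply_eq] using this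
    rcases Nat.eq_zero_or_pos k with rfl | hkpos
    · simp at hk2
    · exact sub_eq_zero.mp (pow_eq_zero_iff hkpos.ne' |>.mp hk2)
  have hMinv : exp M * exp (-M) = 1 := by
    rw [← Matrix.exp_add_of_commute _ _ ((Commute.refl M).neg_right)]
    simp
  have hne : exp μ ≠ 0 := by
    have h2 : exp μ * exp (-μ) = 1 := by
      rw [← NormedSpace.exp_add_of_commute (Commute.all _ _)]
      simp
    exact left_ne_zero_of_mul_eq_one h2
  have hexpNM : exp N = exp M := by
    have h2 : exp μ • exp N = exp μ • exp M := h1.trans (by rw [hsc])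
    calc exp N = (exp μ)⁻¹ • exp μ • exp N := (inv_smul_smul₀ hne _).symm
    _ = (exp μ)⁻¹ • exp μ • exp M := by rw [h2]
    _ = exp M := inv_smul_smul₀ hne _
  have h4 : exp N = exp (N - M) * exp M := by
    rw [← Matrix.exp_add_of_commute _ _ (hNM.sub_left (Commute.refl M)), sub_add_cancel]
  have h3 : exp (N - M) = 1 := by
    calc exp (N - M) = exp (N - M) * (exp M * exp (-M)) := by rw [hMinv, mul_one]
    _ = (exp (N - M) * exp M) * exp (-M) := by rw [mul_assoc]
    _ = exp N * exp (-M) := by rw [← h4]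
    _ = exp M * exp (-M) := by rw [hexpNM]
    _ = 1 := hMinv
  have h5 : N - M = 0 := aux_eq_zero_of_exp_eq_one (𝕂 := 𝕂) (hNM.isNilpotent_sub ⟨n, hN⟩ ⟨n, hM⟩) h3
  exact ⟨hsc.symm, sub_eq_zero.mp h5⟩


end Main

/-- Lemma 3.5 / Proposition 3.6(i): for commuting `A, B ∈ 𝕋_n(K)` with `exp A = exp B`:
over `ℝ` one gets `A = B`, and over `ℂ` one gets `A = B + 2πik·I` for some integer `k`. -/
theorem exp_eq_exp_of_commute_lowerTri (n : ℕ) :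
    (∀ A B : Matrix (Fin n) (Fin n) ℝ, LowerTriConstDiag A → LowerTriConstDiag B →
      A * B = B * A → exp A = exp B → A = B) ∧
    (∀ A B : Matrix (Fin n) (Fin n) ℂ, LowerTriConstDiag A → LowerTriConstDiag B →
      A * B = B * A → exp A = exp B →
      ∃ k : ℤ, A = B + ((2 * (Real.pi : ℂ) * (k : ℂ)) * Complex.I) •
        (1 : Matrix (Fin n) (Fin n) ℂ)) := by
  constructor
  · intro A B hA hB hcomm hexp
    rcases Nat.eq_zero_or_pos n with rfl | hn
    · ext i j; exact i.elim0
    obtain ⟨h1, h2⟩ := aux_key hn A B hA hB hcomm hexp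
    have hμν : A ⟨0, hn⟩ ⟨0, hn⟩ = B ⟨0, hn⟩ ⟨0, hn⟩ := by
      apply Real.exp_injective
      rw [Real.exp_eq_exp_ℝ]
      exact h1
    rw [hμν] at h2
    exact sub_left_inj.mp h2
  · intro A B hA hB hcomm hexp
    rcases Nat.eq_zero_or_pos n with rfl | hn
    · exact ⟨0, by ext i j; exact i.elim0⟩
    obtain ⟨h1, h2⟩ := aux_key hn A B hA hB hcomm hexp
    rw [← Complex.exp_eq_exp_ℂ] at h1
    obtain ⟨k, hk⟩ := Complex.exp_eq_exp_iff_exists_int.mp h1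
    refine ⟨k, ?_⟩
    set μ := A ⟨0, hn⟩ ⟨0, hn⟩
    set ν := B ⟨0, hn⟩ ⟨0, hn⟩
    have h2' : A + ν • (1 : Matrix (Fin n) (Fin n) ℂ) = B + μ • 1 :=
      sub_eq_sub_iff_add_eq_add.mp h2
    have h3 : A = B + (μ - ν) • (1 : Matrix (Fin n) (Fin n) ℂ) := by
      calc A = A + ν • 1 - ν • 1 := by abel
      _ = B + μ • 1 - ν • 1 := by rw [h2']
      _ = B + (μ - ν) • 1 := by rw [sub_smul]; abel
    have hdiff : μ - ν = (2 * (Real.pi : ℂ) * (k : ℂ)) * Complex.I := by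
      rw [hk]; ring
    rw [h3, hdiff]
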